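/- arXiv:2503.10205 — 2 statements merged into one kernel-verified Lean document; each statement's English description precedes it below -/
import Mathlib

section
/- Let G be a connected graph and assume s is globally underestimating. Then for every x ∈ X = [−1,1]^N, xᵀ D f(x) ≤ 0, and xᵀ D f(x) = 0 if and only if x = c·𝟙 for some c ∈ Fix(s). -/
open Filter

/-- The vector field `f(x) = D⁻¹ A s(x) - x` of the nonlinear consensus dynamics:
`f(x)_i = (1/d_i) ∑_j a_ij s(x_j) - x_i`. -/
noncomputable def vecField {N : ℕ} (G : SimpleGraph (Fin N)) [DecidableRel G.Adj]
    (s : ℝ → ℝ) (x : Fin N → ℝ) : Fin N → ℝ :=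
  fun i => (∑ j, G.adjMatrix ℝ i j * s (x j)) / (G.degree i : ℝ) - x i

private lemma double_sum_zero {N : ℕ} (F : Fin N → Fin N → ℝ)
    (hF : ∀ i j, F i j + F j i = 0) : ∑ i, ∑ j, F i j = 0 := by
  have h2 : (∑ i, ∑ j, F i j) + (∑ i, ∑ j, F i j) = 0 := by
    nth_rewrite 2 [Finset.sum_comm]
    simp only [← Finset.sum_add_distrib]
    simp [hF]
  linarith

/-- **Lyapunov decrease under a globally underestimating signal.** For a connected graph
and a globally underestimating signal `s` (i.e. `y (s(y) - y) ≤ 0` on `[-1,1]`), for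
every `x ∈ [-1,1]^N` one has `xᵀ D f(x) ≤ 0`, with equality iff `x = c·𝟙` for some
fixed point `c` of `s`. -/
theorem lyapunov_derivative_underestimation {N : ℕ} (hN : 2 ≤ N)
    (G : SimpleGraph (Fin N)) [DecidableRel G.Adj] (hconn : G.Connected)
    (s : ℝ → ℝ)
    (hmono : MonotoneOn s (Set.Icc (-1 : ℝ) 1))
    (hlip : ∃ K : NNReal, LipschitzOnWith K s (Set.Icc (-1 : ℝ) 1))
    (hmaps : Set.MapsTo s (Set.Icc (-1 : ℝ) 1) (Set.Icc (-1 : ℝ) 1))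
    (hunder : ∀ y ∈ Set.Icc (-1 : ℝ) 1, y * (s y - y) ≤ 0)
    (x : Fin N → ℝ) (hx : ∀ i, x i ∈ Set.Icc (-1 : ℝ) 1) :
    (∑ i, (G.degree i : ℝ) * x i * vecField G s x i) ≤ 0 ∧
    ((∑ i, (G.degree i : ℝ) * x i * vecField G s x i) = 0 ↔
      ∃ c ∈ Set.Icc (-1 : ℝ) 1, s c = c ∧ x = fun _ => c) := by
  classical
  have hNpos : 0 < N := by omega
  haveI : Nontrivial (Fin N) := Fin.nontrivial_iff_two_le.mpr hN
  set a : Fin N → Fin N → ℝ := fun i j => G.adjMatrix ℝ i j with ha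
  set y : Fin N → ℝ := fun i => s (x i) with hy
  -- degree positivity
  have hdeg : ∀ i, 0 < G.degree i := by
    intro i
    rw [G.degree_pos_iff_exists_adj]
    obtain ⟨j, hj⟩ := exists_ne i
    obtain ⟨w⟩ := hconn.preconnected i j
    cases w with
    | nil => exact absurd rfl hj
    | cons h p => exact ⟨_, h⟩
  have hdpos : ∀ i, (0:ℝ) < (G.degree i : ℝ) := fun i => by exact_mod_cast hdeg i
  have hdsum : ∀ i : Fin N, (G.degree i : ℝ) = ∑ j, a i j := by
    intro i
    simp [ha, SimpleGraph.adjMatrix_apply, SimpleGraph.degree,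
      SimpleGraph.neighborFinset_eq_filter, Finset.sum_boole]
  have hasymm : ∀ i j, a i j = a j i := by
    intro i j; simp [ha, SimpleGraph.adjMatrix_apply, SimpleGraph.adj_comm]
  have hanneg : ∀ i j, (0:ℝ) ≤ a i j := by
    intro i j; simp only [ha, SimpleGraph.adjMatrix_apply]; positivity
  -- monotonicity on products along pairs
  have hpair : ∀ i j, 0 ≤ (x i - x j) * (y i - y j) := by
    intro i j
    rcases le_total (x i) (x j) with h | h
    · have := hmono (hx i) (hx j) h
      have hyle : y i ≤ y j := by simpa [hy] using this
      nlinarith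
    · have := hmono (hx j) (hx i) h
      exact mul_nonneg (by linarith) (by simpa [hy] using sub_nonneg.mpr this)
  -- key identity
  have key : (∑ i, (G.degree i : ℝ) * x i * vecField G s x i)
      = (∑ j, (G.degree j : ℝ) * (x j * (y j - x j)))
        - (1/2) * ∑ i, ∑ j, a i j * ((x i - x j) * (y i - y j)) := by
    have e1 : (∑ i, (G.degree i : ℝ) * x i * vecField G s x i)
        = ∑ i, ((∑ j, a i j * (x i * y j)) - ∑ j, a i j * x i ^ 2) := by
      refine Finset.sum_congr rfl fun i _ => ?_
      have hd := (hdpos i).ne'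
      have h1 : (∑ j, a i j * (x i * y j)) = x i * ∑ j, a i j * y j := by
        rw [Finset.mul_sum]; exact Finset.sum_congr rfl fun j _ => by ring
      have h2 : (∑ j, a i j * x i ^ 2) = (G.degree i : ℝ) * x i ^ 2 := by
        rw [hdsum i, Finset.sum_mul]
      rw [vecField, show (∑ j, G.adjMatrix ℝ i j * s (x j)) = ∑ j, a i j * y j from rfl,
        h1, h2]
      generalize (∑ j, a i j * y j) = T
      field_simp
    have e2 : (∑ j, (G.degree j : ℝ) * (x j * (y j - x j)))
        = ∑ i, ∑ j, a i j * (x j * (y j - x j)) := by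
      rw [Finset.sum_comm]
      refine Finset.sum_congr rfl fun j _ => ?_
      rw [hdsum j, Finset.sum_mul]
      exact Finset.sum_congr rfl fun i _ => by rw [hasymm j i]
    rw [e1, e2]
    have hz : ∑ i, ∑ j, (a i j * (x i * y j) - a i j * x i ^ 2
        - a i j * (x j * (y j - x j))
        + (1/2) * (a i j * ((x i - x j) * (y i - y j)))) = 0 := by
      apply double_sum_zero
      intro i j
      have h := hasymm i j
      rw [show a j i = a i j from (hasymm i j).symm]
      ring
    have hsplit : ∑ i, ∑ j, (a i j * (x i * y j) - a i j * x i ^ 2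
        - a i j * (x j * (y j - x j))
        + (1/2) * (a i j * ((x i - x j) * (y i - y j))))
        = ∑ i, ((∑ j, a i j * (x i * y j)) - ∑ j, a i j * x i ^ 2)
          - ∑ i, ∑ j, a i j * (x j * (y j - x j))
          + (1/2) * ∑ i, ∑ j, a i j * ((x i - x j) * (y i - y j)) := by
      rw [Finset.mul_sum, ← Finset.sum_sub_distrib, ← Finset.sum_add_distrib]
      refine Finset.sum_congr rfl fun i _ => ?_
      rw [Finset.mul_sum, ← Finset.sum_sub_distrib, ← Finset.sum_sub_distrib,
        ← Finset.sum_add_distrib]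
    rw [hsplit] at hz
    linarith
  -- sign facts
  have hT1 : ∀ j, (G.degree j : ℝ) * (x j * (y j - x j)) ≤ 0 := fun j =>
    mul_nonpos_of_nonneg_of_nonpos (le_of_lt (hdpos j)) (hunder (x j) (hx j))
  have hT1sum : (∑ j, (G.degree j : ℝ) * (x j * (y j - x j))) ≤ 0 :=
    Finset.sum_nonpos fun j _ => hT1 j
  have hT2term : ∀ i j, 0 ≤ a i j * ((x i - x j) * (y i - y j)) := fun i j =>
    mul_nonneg (hanneg i j) (hpair i j)
  have hT2sum : 0 ≤ ∑ i, ∑ j, a i j * ((x i - x j) * (y i - y j)) :=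
    Finset.sum_nonneg fun i _ => Finset.sum_nonneg fun j _ => hT2term i j
  have hle : (∑ i, (G.degree i : ℝ) * x i * vecField G s x i) ≤ 0 := by
    rw [key]; linarith
  refine ⟨hle, ?_, ?_⟩
  · -- equality implies consensus at a fixed point
    intro h0
    have hT1z : (∑ j, (G.degree j : ℝ) * (x j * (y j - x j))) = 0 := by
      rw [key] at h0; linarith
    have hT2z : (∑ i, ∑ j, a i j * ((x i - x j) * (y i - y j))) = 0 := by
      rw [key] at h0; linarith
    -- s 0 = 0
    have h0I : (0:ℝ) ∈ Set.Icc (-1 : ℝ) 1 := by constructor <;> norm_num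
    have hs0 : s 0 = 0 := by
      rcases lt_trichotomy (s 0) 0 with hlt | heq | hgt
      · exfalso
        have hmem : s 0 / 2 ∈ Set.Icc (-1 : ℝ) 1 := by
          have := hmaps h0I
          constructor <;> [linarith [this.1]; linarith [this.2]]
        have hm := hmono hmem h0I (by linarith)
        have hu := hunder (s 0 / 2) hmem
        nlinarith
      · exact heq
      · exfalso
        have hmem : s 0 / 2 ∈ Set.Icc (-1 : ℝ) 1 := by
          have := hmaps h0I
          constructor <;> [linarith [this.1]; linarith [this.2]]
        have hm := hmono h0I hmem (by linarith)
        have hu := hunder (s 0 / 2) hmem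
        nlinarith
    -- each vertex is at a fixed point
    have hfix : ∀ j, s (x j) = x j := by
      intro j
      have hall := (Finset.sum_eq_zero_iff_of_nonpos (fun j _ => hT1 j)).mp hT1z j
        (Finset.mem_univ j)
      have hd := (hdpos j).ne'
      have hxz : x j * (y j - x j) = 0 := by
        rcases mul_eq_zero.mp hall with h | h
        · exact absurd h hd
        · exact h
      rcases mul_eq_zero.mp hxz with h | h
      · rw [h]; exact h ▸ hs0
      · have : y j = x j := by linarith [sub_eq_zero.mp h]
        simpa [hy] using this
    -- adjacent vertices are equal
    have hedge : ∀ i j, G.Adj i j → x i = x j := by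
      intro i j hij
      have hrow := (Finset.sum_eq_zero_iff_of_nonneg
        (fun i _ => Finset.sum_nonneg fun j _ => hT2term i j)).mp hT2z i (Finset.mem_univ i)
      have hterm := (Finset.sum_eq_zero_iff_of_nonneg
        (fun j _ => hT2term i j)).mp hrow j (Finset.mem_univ j)
      have haij : a i j = 1 := by simp [ha, SimpleGraph.adjMatrix_apply, hij]
      rw [haij, one_mul] at hterm
      have hterm' : (x i - x j) * (s (x i) - s (x j)) = 0 := hterm
      rw [hfix i, hfix j] at hterm'
      have := mul_self_eq_zero.mp hterm'
      linarith [sub_eq_zero.mp this]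
    -- constancy by connectivity
    have hconst : ∀ i j : Fin N, x i = x j := by
      intro i j
      obtain ⟨w⟩ := hconn.preconnected i j
      induction w with
      | nil => rfl
      | cons h p ih => exact (hedge _ _ h).trans ih
    refine ⟨x ⟨0, hNpos⟩, hx _, hfix _, funext fun i => hconst i _⟩
  · -- consensus at a fixed point implies equality
    rintro ⟨c, hcI, hsc, rfl⟩
    refine Finset.sum_eq_zero fun i _ => ?_
    have hd := (hdpos i).ne'
    have hv : vecField G s (fun _ => c) i = 0 := by
      simp only [vecField]
      rw [show (∑ j, G.adjMatrix ℝ i j * s c) = (∑ j, a i j) * s c from by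
        rw [Finset.sum_mul]]
      rw [← hdsum i, hsc]
      field_simp
      ring
    rw [hv, mul_zero]
end

section
/- Let G be a connected graph, c ∈ Fix(s), and let I be a relative neighborhood of c in [−1,1] such that (x − c)(s(x) − x) ≤ 0 for all x ∈ I. Then for every x ∈ I^N, (x − c·𝟙)ᵀ D f(x) ≤ 0; equivalently, the Lyapunov function V(x) = ½ (x − c·𝟙)ᵀ D (x − c·𝟙) is non-increasing along the vector field f on I^N. -/
open Filter

/-- **Lyapunov decrease around a consistently estimated fixed point.** Let `c` be a
fixed point of `s` and `I ⊆ [-1,1]` a relative neighborhood of `c` on which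
`(y - c)(s(y) - y) ≤ 0`. Then for every `x ∈ I^N`, `(x - c·𝟙)ᵀ D f(x) ≤ 0`, i.e. the
Lyapunov function `V(x) = ½ (x - c·𝟙)ᵀ D (x - c·𝟙)` is non-increasing along `f`. -/
theorem lyapunov_decrease_consistent_estimation {N : ℕ} (hN : 2 ≤ N)
    (G : SimpleGraph (Fin N)) [DecidableRel G.Adj] (hconn : G.Connected)
    (s : ℝ → ℝ)
    (hmono : MonotoneOn s (Set.Icc (-1 : ℝ) 1))
    (hlip : ∃ K : NNReal, LipschitzOnWith K s (Set.Icc (-1 : ℝ) 1))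
    (hmaps : Set.MapsTo s (Set.Icc (-1 : ℝ) 1) (Set.Icc (-1 : ℝ) 1))
    (c : ℝ) (hc : c ∈ Set.Icc (-1 : ℝ) 1) (hfix : s c = c)
    (I : Set ℝ) (hI : I ∈ nhdsWithin c (Set.Icc (-1 : ℝ) 1))
    (hIsub : I ⊆ Set.Icc (-1 : ℝ) 1)
    (hcons : ∀ y ∈ I, (y - c) * (s y - y) ≤ 0) :
    ∀ x : Fin N → ℝ, (∀ i, x i ∈ I) →
      (∑ i, (G.degree i : ℝ) * (x i - c) * vecField G s x i) ≤ 0 := by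
  -- key contraction : (s y - c)^2 ≤ (y - c)^2 on I
  have hkey : ∀ y ∈ I, (s y - c)^2 ≤ (y - c)^2 := by
    intro y hy
    have hyI := hIsub hy
    have hc' := hcons y hy
    rcases le_or_gt c y with h | h
    · have h1 : c ≤ s y := by
        have := hmono hc hyI h; rwa [hfix] at this
      rcases h.eq_or_lt with he | hlt
      · simp [← he, hfix]
      · have h2 : s y ≤ y := by nlinarith
        nlinarith
    · have h1 : s y ≤ c := by
        have := hmono hyI hc h.le; rwa [hfix] at this
      nlinarith
  intro x hx
  -- positive degrees
  have hdeg : ∀ i, 0 < G.degree i := by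
    intro i
    rw [G.degree_pos_iff_exists_adj i]
    obtain ⟨j, hj⟩ := Fintype.exists_ne_of_one_lt_card (by rw [Fintype.card_fin]; omega) i
    obtain ⟨p⟩ := hconn.preconnected i j
    cases p with
    | nil => exact absurd rfl hj.symm
    | cons h _ => exact ⟨_, h⟩
  have hdsum : ∀ i, (G.degree i : ℝ) = ∑ j, G.adjMatrix ℝ i j := by
    intro i
    have := G.adjMatrix_mulVec_const_apply (α := ℝ) (a := 1) (v := i)
    simpa [Matrix.mulVec, dotProduct] using this.symm
  have hterm : ∀ i, (G.degree i : ℝ) * (x i - c) * vecField G s x i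
      = ∑ j, G.adjMatrix ℝ i j * ((x i - c) * (s (x j) - x i)) := by
    intro i
    have hd : (G.degree i : ℝ) ≠ 0 := by exact_mod_cast (hdeg i).ne'
    unfold vecField
    rw [mul_comm ((G.degree i : ℝ)) (x i - c), mul_assoc, mul_sub,
      mul_div_cancel₀ _ hd]
    rw [hdsum i, Finset.sum_mul, ← Finset.sum_sub_distrib, Finset.mul_sum]
    exact Finset.sum_congr rfl fun j _ => by ring
  rw [Finset.sum_congr rfl (fun i _ => hterm i)]
  have hA : ∀ i j, (0:ℝ) ≤ G.adjMatrix ℝ i j := by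
    intro i j; simp [SimpleGraph.adjMatrix_apply]; split <;> norm_num
  have hsym : ∀ i j, G.adjMatrix ℝ i j = G.adjMatrix ℝ j i := by
    intro i j; simp [SimpleGraph.adjMatrix_apply, G.adj_comm]
  have hbound : ∑ i, ∑ j, G.adjMatrix ℝ i j * ((x i - c) * (s (x j) - x i))
      ≤ ∑ i, ∑ j, G.adjMatrix ℝ i j * (((x j - c)^2 - (x i - c)^2)/2) := by
    apply Finset.sum_le_sum; intro i _
    apply Finset.sum_le_sum; intro j _
    apply mul_le_mul_of_nonneg_left _ (hA i j)
    have h1 := hkey (x j) (hx j)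
    nlinarith [sq_nonneg (x i - c - (s (x j) - c))]
  refine hbound.trans (le_of_eq ?_)
  have : ∑ i, ∑ j, G.adjMatrix ℝ i j * (((x j - c)^2 - (x i - c)^2)/2)
      = (∑ i, ∑ j, G.adjMatrix ℝ i j * (x j - c)^2
        - ∑ i, ∑ j, G.adjMatrix ℝ i j * (x i - c)^2)/2 := by
    rw [← Finset.sum_sub_distrib, Finset.sum_div]
    apply Finset.sum_congr rfl; intro i _
    rw [← Finset.sum_sub_distrib, Finset.sum_div]
    apply Finset.sum_congr rfl; intro j _
    ring
  rw [this]
  have heq : ∑ i, ∑ j, G.adjMatrix ℝ i j * (x j - c)^2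
      = ∑ i, ∑ j, G.adjMatrix ℝ i j * (x i - c)^2 := by
    rw [Finset.sum_comm]
    apply Finset.sum_congr rfl; intro i _
    apply Finset.sum_congr rfl; intro j _
    rw [hsym]
  rw [heq, sub_self, zero_div]
end
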